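/- (Topological linearization.) Assume (H1), (H2⁰) and K·L < α. Then there exists a map H : I × X → X such that for all s, t ∈ I: (i) H(t,·) is a homeomorphism of X with H(t,0) = 0; (ii) the linear and the semilinear equations are conjugated: H(t, Φ(t,s)ξ) = φ(t, s, H(s,ξ)) for all ξ ∈ X; (iii) H(t,·) and its inverse are near the identity: ‖H(t,ξ) − ξ‖_t ≤ K·M/α and ‖H(t,·)⁻¹(η) − η‖_t ≤ K·M/α for all ξ, η ∈ X; (iv) H(t,·) and its inverse satisfy global Lipschitz conditions; (v) the maps H : I × X → X and (t,x) ↦ H(t,·)⁻¹(x) are continuous. -/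

import Mathlib

set_option maxHeartbeats 1000000
open Set MeasureTheory Real Filter Topology

private lemma aux_floor_tendsto (u : ℝ) :
    Tendsto (fun n : ℕ => ((⌊u * (n+1)⌋ : ℝ) / (n+1))) atTop (𝓝 u) := by
  have hpos : ∀ n : ℕ, (0:ℝ) < (n+1) := fun n => by positivity
  have hlow : Tendsto (fun n : ℕ => u - 1/((n:ℝ)+1)) atTop (𝓝 u) := by
    have : Tendsto (fun n : ℕ => 1/((n:ℝ)+1)) atTop (𝓝 0) := tendsto_one_div_add_atTop_nhds_zero_nat
    simpa using (tendsto_const_nhds (x := u)).sub this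
  refine tendsto_of_tendsto_of_tendsto_of_le_of_le hlow (tendsto_const_nhds) ?_ ?_
  · intro n
    rw [sub_le_iff_le_add, ← add_div, le_div_iff₀ (hpos n)]
    have := Int.sub_one_lt_floor (u * (n+1))
    nlinarith [this]
  · intro n
    rw [div_le_iff₀ (hpos n)]
    exact Int.floor_le _

private lemma aux_meas {X : Type*} [NormedAddCommGroup X]
    (τ₀ : ℝ) (F : ℝ → X → X)
    (hFmeas : ∀ x : X, StronglyMeasurable (fun t => F t x))
    (hFcont : ∀ᵐ t ∂(volume.restrict (Set.Ici τ₀)), Continuous (F t))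
    (c : ℝ → X) (hc : Continuous c) (s : Set ℝ) (hs : s ⊆ Set.Ici τ₀) :
    AEStronglyMeasurable (fun u => F u (c u)) (volume.restrict s) := by
  have hcont : ∀ᵐ t ∂(volume.restrict s), Continuous (F t) :=
    ae_restrict_of_ae_restrict_of_subset hs hFcont
  set f : ℕ → ℝ → X := fun n u => F u (c ((⌊u * (n+1)⌋ : ℝ) / (n+1))) with hf
  have hfSM : ∀ n, StronglyMeasurable (f n) := by
    intro n
    have hfloor : Measurable (fun u : ℝ => ⌊u * ((n:ℝ)+1)⌋) :=
      (measurable_id.mul_const _).floor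
    set g : ℤ → ℝ → X := fun k u =>
      Set.indicator {u : ℝ | ⌊u * ((n:ℝ)+1)⌋ = k} (fun u => F u (c ((k:ℝ)/(n+1)))) u with hg
    have hgSM : ∀ k, StronglyMeasurable (g k) := by
      intro k
      exact (hFmeas _).indicator (hfloor (measurableSet_singleton k))
    have hlim : ∀ u, Tendsto (fun m : ℕ => ∑ k ∈ Finset.Icc (-(m:ℤ)) m, g k u) atTop
        (𝓝 (f n u)) := by
      intro u
      set k₀ := ⌊u * ((n:ℝ)+1)⌋
      apply tendsto_atTop_of_eventually_const (i₀ := k₀.natAbs)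
      intro m hm
      have hk₀ : k₀ ∈ Finset.Icc (-(m:ℤ)) m := by
        simp only [Finset.mem_Icc]
        omega
      rw [Finset.sum_eq_single_of_mem k₀ hk₀]
      · simp only [g, Set.indicator_of_mem, Set.mem_setOf_eq]
        exact Set.indicator_of_mem (show u ∈ {u : ℝ | ⌊u * ((n:ℝ)+1)⌋ = k₀} from rfl) (fun u => F u (c ((k₀:ℝ)/(n+1))))
      · intro k _ hk
        apply Set.indicator_of_notMem
        simp only [Set.mem_setOf_eq]
        omega
    exact stronglyMeasurable_of_tendsto _ (fun m : ℕ => Finset.stronglyMeasurable_sum (Finset.Icc (-(m:ℤ)) m) fun k _ => hgSM k) (tendsto_pi_nhds.mpr fun u => by simpa only [Finset.sum_apply] using hlim u)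
  apply aestronglyMeasurable_of_tendsto_ae atTop (fun n => (hfSM n).aestronglyMeasurable)
  filter_upwards [hcont] with u hu
  exact (hu.tendsto (c u)).comp ((hc.tendsto u).comp (aux_floor_tendsto u))

private lemma aux_hb {X : Type*} [NormedAddCommGroup X] [NormedSpace ℝ X]
    (N : X → ℝ) (hadd : ∀ x y, N (x+y) ≤ N x + N y)
    (hsmul : ∀ c : ℝ, ∀ x, N (c • x) = |c| * N x)
    (C : ℝ) (hC : ∀ x, N x ≤ C * ‖x‖) (y : X) :
    ∃ g : X →L[ℝ] ℝ, g y = N y ∧ ∀ x, g x ≤ N x := by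
  have hnonneg : ∀ x : X, 0 ≤ N x := by
    intro x
    have h0 : N 0 = 0 := by simpa using hsmul 0 x
    have := hadd x (-x)
    have hneg : N (-x) = N x := by simpa using hsmul (-1) x
    simp only [add_neg_cancel, h0, hneg] at this
    linarith
  rcases eq_or_ne y 0 with rfl | hy
  · refine ⟨0, ?_, fun x => hnonneg x⟩
    have h0 : N 0 = 0 := by simpa using hsmul 0 0
    simp [h0]
  · set f := LinearPMap.mkSpanSingleton' (R := ℝ) (σ := RingHom.id ℝ) y (N y)
      (fun c hc => by
        rcases smul_eq_zero.mp hc with h | h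
        · simp [h]
        · exact absurd h hy) with hfdef
    obtain ⟨g, hg1, hg2⟩ := exists_extension_of_le_sublinear f N
      (fun c hc x => by rw [hsmul, abs_of_pos hc])
      hadd
      (by
        rintro ⟨x, hx⟩
        have hx' := hx
        rw [LinearPMap.domain_mkSpanSingleton] at hx'
        obtain ⟨c, rfl⟩ := Submodule.mem_span_singleton.mp hx'
        rw [LinearPMap.mkSpanSingleton'_apply]
        calc (c • N y : ℝ) = c * N y := rfl
          _ ≤ |c| * N y := mul_le_mul_of_nonneg_right (le_abs_self c) (hnonneg y)
          _ = N (c • y) := (hsmul c y).symm)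
    have hgy : g y = N y := by
      have hmem : y ∈ f.domain := by
        rw [LinearPMap.domain_mkSpanSingleton]
        exact Submodule.mem_span_singleton_self y
      have := hg1 ⟨y, hmem⟩
      rwa [LinearPMap.mkSpanSingleton'_apply_self] at this
    have hb : ∀ x : X, ‖g x‖ ≤ C * ‖x‖ := by
      intro x
      rw [Real.norm_eq_abs, abs_le]
      constructor
      · have := (hg2 (-x)).trans (hC (-x))
        simp only [map_neg, norm_neg] at this
        linarith
      · exact (hg2 x).trans (hC x)
    exact ⟨g.mkContinuous C hb, by simpa using hgy, fun x => by simpa using hg2 x⟩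

private lemma aux_exp_integral {β : ℝ} (hβ : β ≠ 0) (c a b : ℝ) :
    ∫ u in a..b, Real.exp (β*(u-c)) = Real.exp (β*(b-c))/β - Real.exp (β*(a-c))/β := by
  have hd : ∀ u : ℝ, HasDerivAt (fun u => Real.exp (β*(u-c))/β) (Real.exp (β*(u-c))) u := by
    intro u
    have h1 : HasDerivAt (fun u : ℝ => β*(u-c)) β u := by
      simpa using ((hasDerivAt_id u).sub_const c).const_mul β
    have := h1.exp.div_const β
    simpa [mul_div_assoc, div_self hβ] using this
  exact intervalIntegral.integral_eq_sub_of_hasDerivAt (fun u _ => hd u)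
    ((Real.continuous_exp.comp (by fun_prop)).intervalIntegrable a b)

private lemma aux_exp_integral' {β : ℝ} (hβ : β ≠ 0) (c a b : ℝ) :
    ∫ u in a..b, Real.exp (β*(c-u)) = Real.exp (β*(c-a))/β - Real.exp (β*(c-b))/β := by
  have hd : ∀ u : ℝ, HasDerivAt (fun u => -(Real.exp (β*(c-u))/β)) (Real.exp (β*(c-u))) u := by
    intro u
    have h1 : HasDerivAt (fun u : ℝ => β*(c-u)) (-β) u := by
      simpa using ((hasDerivAt_id u).const_sub c).const_mul β
    have := (h1.exp.div_const β).neg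
    have h2 : -(Real.exp (β*(c-u)) * -β / β) = Real.exp (β*(c-u)) := by
      field_simp
    rw [h2] at this
    exact this
  have := intervalIntegral.integral_eq_sub_of_hasDerivAt (f := fun u => -(Real.exp (β*(c-u))/β))
    (fun u _ => hd u)
    ((Real.continuous_exp.comp (by fun_prop)).intervalIntegrable a b)
  rw [this]; ring

theorem statement13
    {X : Type*} [NormedAddCommGroup X] [NormedSpace ℝ X] [CompleteSpace X]
    (τ₀ : ℝ)
    (Nt : ℝ → X → ℝ)
    (hNadd : ∀ t : ℝ, ∀ x y : X, Nt t (x + y) ≤ Nt t x + Nt t y)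
    (hNsmul : ∀ t : ℝ, ∀ c : ℝ, ∀ x : X, Nt t (c • x) = |c| * Nt t x)
    (ℓ : ℝ → ℝ)
    (hℓpos : ∀ t ∈ Set.Ici τ₀, 0 < ℓ t)
    (hℓloc : ∀ a b : ℝ, ∃ C : ℝ, ∀ t ∈ Set.Icc a b ∩ Set.Ici τ₀, ℓ t ≤ C)
    (hNequiv : ∀ t ∈ Set.Ici τ₀, ∀ x : X, (1 / ℓ t) * ‖x‖ ≤ Nt t x ∧ Nt t x ≤ ℓ t * ‖x‖)
    (Φ : ℝ → ℝ → X →L[ℝ] X)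
    (hΦcont : ContinuousOn (fun p : ℝ × ℝ => Φ p.1 p.2) (Set.Ici τ₀ ×ˢ Set.Ici τ₀))
    (hΦid : ∀ t ∈ Set.Ici τ₀, Φ t t = ContinuousLinearMap.id ℝ X)
    (hΦcomp : ∀ t ∈ Set.Ici τ₀, ∀ r ∈ Set.Ici τ₀, ∀ s ∈ Set.Ici τ₀,
      Φ t s = (Φ t r).comp (Φ r s))
    (K α : ℝ) (hK : 1 ≤ K) (hα : 0 < α)
    (hH1 : ∀ s ∈ Set.Ici τ₀, ∀ t ∈ Set.Ici τ₀, s ≤ t → ∀ x : X,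
      Nt t (Φ t s x) ≤ K * Real.exp (-α * (t - s)) * Nt s x)
    (F : ℝ → X → X)
    (hFmeas : ∀ x : X, StronglyMeasurable (fun t => F t x))
    (hFcont : ∀ᵐ t ∂(volume.restrict (Set.Ici τ₀)), Continuous (F t))
    (L M : ℝ) (hL : 0 ≤ L) (hM : 0 ≤ M)
    (hH2 : ∀ᵐ t ∂(volume.restrict (Set.Ici τ₀)),
      F t 0 = 0 ∧ (∀ x : X, Nt t (F t x) ≤ M) ∧
        (∀ x y : X, Nt t (F t x - F t y) ≤ L * Nt t (x - y)))
    (sol : ℝ → ℝ → X → X)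
    (hsolCont : ContinuousOn (fun p : ℝ × ℝ × X => sol p.1 p.2.1 p.2.2)
      (Set.Ici τ₀ ×ˢ Set.Ici τ₀ ×ˢ (Set.univ : Set X)))
    (hsolId : ∀ τ ∈ Set.Ici τ₀, ∀ x : X, sol τ τ x = x)
    (hsolGrp : ∀ t₀ ∈ Set.Ici τ₀, ∀ t₁ ∈ Set.Ici τ₀, ∀ t₂ ∈ Set.Ici τ₀, ∀ x : X,
      sol t₂ t₀ x = sol t₂ t₁ (sol t₁ t₀ x))
    (hVOC : ∀ s ∈ Set.Ici τ₀, ∀ t ∈ Set.Ici τ₀, ∀ η : X,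
      sol t s η = Φ t s η + ∫ r in s..t, Φ t r (F r (sol r s η)))
    (huniq : ∀ τ ∈ Set.Ici τ₀, ∀ x : ℝ → X, ContinuousOn x (Set.Ici τ₀) →
      (∀ t ∈ Set.Ici τ₀, x t = Φ t τ (x τ) + ∫ r in τ..t, Φ t r (F r (x r))) →
      ∀ t ∈ Set.Ici τ₀, x t = sol t τ (x τ))
    (hKL : K * L < α) :
    ∃ H G : ℝ → X → X,
      (∀ t ∈ Set.Ici τ₀, Continuous (H t) ∧ Continuous (G t) ∧
        (∀ ξ : X, G t (H t ξ) = ξ) ∧ (∀ η : X, H t (G t η) = η) ∧ H t 0 = 0) ∧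
      (∀ s ∈ Set.Ici τ₀, ∀ t ∈ Set.Ici τ₀, ∀ ξ : X, H t (Φ t s ξ) = sol t s (H s ξ)) ∧
      (∀ t ∈ Set.Ici τ₀, ∀ ξ : X, Nt t (H t ξ - ξ) ≤ K * M / α) ∧
      (∀ t ∈ Set.Ici τ₀, ∀ η : X, Nt t (G t η - η) ≤ K * M / α) ∧
      (∀ t ∈ Set.Ici τ₀, ∃ LH : ℝ, 0 ≤ LH ∧
        ∀ ξ ξ' : X, Nt t (H t ξ - H t ξ') ≤ LH * ‖ξ - ξ'‖) ∧
      (∀ t ∈ Set.Ici τ₀, ∃ LG : ℝ, 0 ≤ LG ∧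
        ∀ η η' : X, Nt t (G t η - G t η') ≤ LG * ‖η - η'‖) ∧
      ContinuousOn (fun p : ℝ × X => H p.1 p.2) (Set.Ici τ₀ ×ˢ (Set.univ : Set X)) ∧
      ContinuousOn (fun p : ℝ × X => G p.1 p.2) (Set.Ici τ₀ ×ˢ (Set.univ : Set X)) := by
  classical
  have hτ : τ₀ ∈ Set.Ici τ₀ := Set.self_mem_Ici
  -- basic norm facts
  have hN0 : ∀ t : ℝ, Nt t (0:X) = 0 := fun t => by simpa using hNsmul t 0 0
  have hNneg : ∀ t : ℝ, ∀ x : X, Nt t (-x) = Nt t x := fun t x => by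
    simpa using hNsmul t (-1) x
  have hNnn : ∀ t ∈ Set.Ici τ₀, ∀ x : X, 0 ≤ Nt t x := by
    intro t ht x
    have h := (hNequiv t ht x).1
    have h0 : 0 ≤ (1 / ℓ t) * ‖x‖ :=
      mul_nonneg (le_of_lt (one_div_pos.mpr (hℓpos t ht))) (norm_nonneg x)
    linarith
  have hNle : ∀ t ∈ Set.Ici τ₀, ∀ x : X, ‖x‖ ≤ ℓ t * Nt t x := by
    intro t ht x
    have h := (hNequiv t ht x).1
    have hp := hℓpos t ht
    have h2 : ‖x‖ = ℓ t * ((1/ℓ t) * ‖x‖) := by field_simp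
    rw [h2]
    exact mul_le_mul_of_nonneg_left h hp.le
  -- a.e. hypotheses in pointwise-implication form
  have hH2' : ∀ᵐ r ∂(volume : Measure ℝ), r ∈ Set.Ici τ₀ →
      (F r 0 = 0 ∧ (∀ x : X, Nt r (F r x) ≤ M) ∧
        (∀ x y : X, Nt r (F r x - F r y) ≤ L * Nt r (x - y))) :=
    (ae_restrict_iff' measurableSet_Ici).mp hH2
  -- inverse identities
  have hΦinv : ∀ t ∈ Set.Ici τ₀, ∀ x : X, Φ t τ₀ (Φ τ₀ t x) = x := by
    intro t ht x
    have h := hΦcomp t ht τ₀ hτ t ht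
    rw [hΦid t ht] at h
    have := congrArg (fun f : X →L[ℝ] X => f x) h
    simpa using this.symm
  have hΦinv' : ∀ t ∈ Set.Ici τ₀, ∀ x : X, Φ τ₀ t (Φ t τ₀ x) = x := by
    intro t ht x
    have h := hΦcomp τ₀ hτ t ht τ₀ hτ
    rw [hΦid τ₀ hτ] at h
    have := congrArg (fun f : X →L[ℝ] X => f x) h
    simpa using this.symm
  have hsolinv : ∀ t ∈ Set.Ici τ₀, ∀ x : X, sol τ₀ t (sol t τ₀ x) = x := by
    intro t ht x
    have h := hsolGrp τ₀ hτ t ht τ₀ hτ x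
    rw [hsolId τ₀ hτ] at h
    exact h.symm
  have hsolinv' : ∀ t ∈ Set.Ici τ₀, ∀ x : X, sol t τ₀ (sol τ₀ t x) = x := by
    intro t ht x
    have h := hsolGrp t ht τ₀ hτ t ht x
    rw [hsolId t ht] at h
    exact h.symm
  -- zero solution
  have hsol0 : ∀ t ∈ Set.Ici τ₀, sol t τ₀ (0:X) = 0 := by
    intro t ht
    have h := huniq τ₀ hτ (fun _ => (0:X)) continuousOn_const ?_ t ht
    · exact h.symm
    · intro t' ht'
      have hz : ∫ r in τ₀..t', Φ t' r (F r (0:X)) = 0 := by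
        rw [← intervalIntegral.integral_zero (a := τ₀) (b := t') (μ := volume) (E := X)]
        apply intervalIntegral.integral_congr_ae
        filter_upwards [hH2'] with r hr hrmem
        have hrI : r ∈ Set.Ici τ₀ := by
          rw [Set.uIoc_of_le ht'] at hrmem
          exact le_of_lt hrmem.1
        simp [(hr hrI).1]
      simp [hz]
  -- integrability of the VOC integrands
  have hInt : ∀ a ∈ Set.Ici τ₀, ∀ b ∈ Set.Ici τ₀, ∀ t' ∈ Set.Ici τ₀, ∀ η : X,
      IntervalIntegrable (fun u => Φ t' u (F u (sol u a η))) volume a b := by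
    intro a ha b hb t' ht' η
    rw [intervalIntegrable_iff]
    have hsub : Set.uIoc a b ⊆ Set.Ici τ₀ := by
      intro u hu
      exact le_of_lt (lt_of_le_of_lt (le_min ha hb) hu.1)
    have hc : Continuous (fun u : ℝ => sol (max u τ₀) a η) := by
      apply hsolCont.comp_continuous
        (((continuous_id.max continuous_const)).prodMk
          (continuous_const.prodMk continuous_const))
      exact fun u => ⟨le_max_right u τ₀, ha, trivial⟩
    have hA : Continuous (fun u : ℝ => Φ t' (max u τ₀)) := by
      apply hΦcont.comp_continuous
        (continuous_const.prodMk (continuous_id.max continuous_const))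
      exact fun u => ⟨ht', le_max_right u τ₀⟩
    have hψ : AEStronglyMeasurable (fun u => F u (sol (max u τ₀) a η))
        (volume.restrict (Set.uIoc a b)) :=
      aux_meas τ₀ F hFmeas hFcont _ hc _ hsub
    have hAESM : AEStronglyMeasurable (fun u => Φ t' u (F u (sol u a η)))
        (volume.restrict (Set.uIoc a b)) := by
      have h1 : AEStronglyMeasurable
          (fun u => Φ t' (max u τ₀) (F u (sol (max u τ₀) a η)))
          (volume.restrict (Set.uIoc a b)) :=
        isBoundedBilinearMap_apply.continuous.comp_aestronglyMeasurable
          ((hA.aestronglyMeasurable).prodMk hψ)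
      apply h1.congr
      filter_upwards [ae_restrict_mem measurableSet_uIoc] with u hu
      rw [max_eq_left (hsub hu)]
    obtain ⟨C, hC⟩ := hℓloc (min a b) (max a b)
    obtain ⟨P, hP⟩ := isCompact_uIcc.exists_bound_of_continuousOn
      (s := Set.uIcc a b) hA.continuousOn
    refine MeasureTheory.Integrable.mono' (g := fun _ => P * (C * M))
      (integrableOn_const measure_Ioc_lt_top.ne) hAESM ?_
    filter_upwards [ae_restrict_mem measurableSet_uIoc, ae_restrict_of_ae hH2']
      with u hu h2
    have huI : u ∈ Set.Ici τ₀ := hsub hu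
    have huIcc : u ∈ Set.uIcc a b := Set.uIoc_subset_uIcc hu
    have hPu : ‖Φ t' u‖ ≤ P := by
      have := hP u huIcc
      rwa [max_eq_left huI] at this
    have hPnn : (0:ℝ) ≤ P := le_trans (norm_nonneg _) hPu
    have hCu : ℓ u ≤ C := by
      apply hC u
      constructor
      · exact ⟨le_of_lt hu.1, hu.2⟩
      · exact huI
    have hFb : ‖F u (sol u a η)‖ ≤ ℓ u * M := by
      calc ‖F u (sol u a η)‖ ≤ ℓ u * Nt u (F u (sol u a η)) := hNle u huI _
        _ ≤ ℓ u * M := mul_le_mul_of_nonneg_left ((h2 huI).2.1 _) (hℓpos u huI).le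
    calc ‖Φ t' u (F u (sol u a η))‖ ≤ ‖Φ t' u‖ * ‖F u (sol u a η)‖ :=
          (Φ t' u).le_opNorm _
      _ ≤ P * (ℓ u * M) := by
          apply mul_le_mul hPu hFb (norm_nonneg _) hPnn
      _ ≤ P * (C * M) := by
          apply mul_le_mul_of_nonneg_left (mul_le_mul_of_nonneg_right hCu hM) hPnn
  -- main contraction estimate (iii)
  have hCORE : ∀ t ∈ Set.Ici τ₀, ∀ η : X,
      Nt t (sol t τ₀ η - Φ t τ₀ η) ≤ K * M / α := by
    intro t ht η
    have hvoc := hVOC τ₀ hτ t ht η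
    have hdiff : sol t τ₀ η - Φ t τ₀ η = ∫ r in τ₀..t, Φ t r (F r (sol r τ₀ η)) := by
      rw [hvoc]; abel
    rw [hdiff]
    obtain ⟨g, hgy, hgle⟩ := aux_hb (Nt t) (hNadd t) (hNsmul t) (ℓ t)
      (fun x => (hNequiv t ht x).2) (∫ r in τ₀..t, Φ t r (F r (sol r τ₀ η)))
    rw [← hgy]
    have hfi : IntervalIntegrable (fun r => Φ t r (F r (sol r τ₀ η))) volume τ₀ t :=
      hInt τ₀ hτ t ht t ht η
    rw [← g.intervalIntegral_comp_comm hfi]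
    have hfi' : IntervalIntegrable (fun r => g (Φ t r (F r (sol r τ₀ η)))) volume τ₀ t := by
      rw [intervalIntegrable_iff] at hfi ⊢
      exact g.integrable_comp hfi
    have hbint : IntervalIntegrable (fun r => K * M * Real.exp (α * (r - t))) volume τ₀ t :=
      (Continuous.intervalIntegrable (by fun_prop) _ _)
    have hmono : (∫ r in τ₀..t, g (Φ t r (F r (sol r τ₀ η)))) ≤
        ∫ r in τ₀..t, K * M * Real.exp (α * (r - t)) := by
      apply intervalIntegral.integral_mono_ae_restrict ht hfi' hbint
      filter_upwards [ae_restrict_of_ae hH2', ae_restrict_mem measurableSet_Icc]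
        with r h2 hr
      have hrI : r ∈ Set.Ici τ₀ := hr.1
      calc g (Φ t r (F r (sol r τ₀ η))) ≤ Nt t (Φ t r (F r (sol r τ₀ η))) := hgle _
        _ ≤ K * Real.exp (-α * (t - r)) * Nt r (F r (sol r τ₀ η)) :=
            hH1 r hrI t ht hr.2 _
        _ ≤ K * Real.exp (-α * (t - r)) * M := by
            apply mul_le_mul_of_nonneg_left ((h2 hrI).2.1 _)
            positivity
        _ = K * M * Real.exp (α * (r - t)) := by
            rw [show -α * (t - r) = α * (r - t) by ring]; ring
    apply hmono.trans
    rw [intervalIntegral.integral_const_mul, aux_exp_integral hα.ne' t τ₀ t]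
    have he1 : Real.exp (α * (t - t)) = 1 := by simp
    rw [he1]
    have he2 : 0 ≤ Real.exp (α * (τ₀ - t)) / α := by positivity
    have hKM : 0 ≤ K * M := by positivity
    calc K * M * (1/α - Real.exp (α * (τ₀ - t))/α)
        ≤ K * M * (1/α) := by nlinarith
      _ = K * M / α := by ring
  -- Lipschitz estimate for the flow
  have hLIP : ∀ a ∈ Set.Ici τ₀, ∀ b ∈ Set.Ici τ₀, ∃ Λ : ℝ, 0 ≤ Λ ∧
      ∀ η η' : X, ‖sol b a η - sol b a η'‖ ≤ Λ * ‖η - η'‖ := by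
    intro a ha b hb
    set T := max a b with hT
    have hτT : τ₀ ≤ T := le_trans ha (le_max_left a b)
    have haT : a ∈ Set.Icc τ₀ T := ⟨ha, le_max_left a b⟩
    have hbT : b ∈ Set.Icc τ₀ T := ⟨hb, le_max_right a b⟩
    have hIccsub : Set.Icc τ₀ T ⊆ Set.Ici τ₀ := fun u hu => hu.1
    have hΦC : ContinuousOn (fun p : ℝ × ℝ => Φ p.1 p.2)
        (Set.Icc τ₀ T ×ˢ Set.Icc τ₀ T) :=
      hΦcont.mono (fun p hp => ⟨hp.1.1, hp.2.1⟩)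
    obtain ⟨P, hP⟩ := (isCompact_Icc.prod isCompact_Icc).exists_bound_of_continuousOn hΦC
    have hPnn : 0 ≤ P := le_trans (norm_nonneg _)
      (hP (τ₀, τ₀) ⟨⟨le_refl _, hτT⟩, ⟨le_refl _, hτT⟩⟩)
    obtain ⟨C, hC⟩ := hℓloc τ₀ T
    have hCb : ∀ u ∈ Set.Icc τ₀ T, ℓ u ≤ C := fun u hu => hC u ⟨hu, hu.1⟩
    have hCnn : 0 ≤ C :=
      le_trans (hℓpos τ₀ hτ).le (hCb τ₀ ⟨le_refl _, hτT⟩)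
    set E := P * C^2 * L with hE
    have hEnn : 0 ≤ E := by positivity
    set β := 2*E + 1 with hβ
    have hβpos : 0 < β := by positivity
    refine ⟨Real.exp (β*(T-τ₀)) * (2*P), by positivity, ?_⟩
    intro η η'
    set N := η - η' with hNdef
    set Δ : ℝ → X := fun r => sol r a η - sol r a η' with hΔ
    have hΔc : ContinuousOn Δ (Set.Icc τ₀ T) := by
      have h1 : ContinuousOn (fun r => sol r a η) (Set.Ici τ₀) := by
        apply hsolCont.comp
          (continuousOn_id.prodMk (continuousOn_const.prodMk continuousOn_const))
        intro r hr
        exact ⟨hr, ha, trivial⟩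
      have h2 : ContinuousOn (fun r => sol r a η') (Set.Ici τ₀) := by
        apply hsolCont.comp
          (continuousOn_id.prodMk (continuousOn_const.prodMk continuousOn_const))
        intro r hr
        exact ⟨hr, ha, trivial⟩
      exact (h1.sub h2).mono hIccsub
    obtain ⟨Q, hQ⟩ := isCompact_Icc.exists_bound_of_continuousOn hΔc
    set w : ℝ → ℝ := fun r => Real.exp (-(β*|r-a|)) * ‖Δ r‖ with hw
    have hwnn : ∀ r, 0 ≤ w r := fun r => mul_nonneg (Real.exp_pos _).le (norm_nonneg _)
    set S := w '' Set.Icc τ₀ T with hS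
    have hSne : S.Nonempty := ⟨w τ₀, ⟨τ₀, ⟨le_refl _, hτT⟩, rfl⟩⟩
    have hSbdd : BddAbove S := by
      refine ⟨Q, ?_⟩
      rintro y ⟨r, hr, rfl⟩
      calc w r ≤ 1 * ‖Δ r‖ := by
            apply mul_le_mul_of_nonneg_right ?_ (norm_nonneg _)
            rw [← Real.exp_zero]
            apply Real.exp_le_exp.mpr
            simp only [neg_nonpos]
            positivity
        _ = ‖Δ r‖ := one_mul _
        _ ≤ Q := hQ r hr
    set D := sSup S with hD
    have hwD : ∀ r ∈ Set.Icc τ₀ T, w r ≤ D := fun r hr => le_csSup hSbdd ⟨r, hr, rfl⟩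
    have hDnn : 0 ≤ D := le_trans (hwnn τ₀) (hwD τ₀ ⟨le_refl _, hτT⟩)
    have hΔD : ∀ u ∈ Set.Icc τ₀ T, ‖Δ u‖ ≤ Real.exp (β*|u-a|) * D := by
      intro u hu
      have h1 := hwD u hu
      have h2 : ‖Δ u‖ = Real.exp (β*|u-a|) * w u := by
        rw [hw]
        rw [← mul_assoc, ← Real.exp_add]
        simp
      rw [h2]
      exact mul_le_mul_of_nonneg_left h1 (Real.exp_pos _).le
    -- key pointwise estimate
    have hkey : ∀ r ∈ Set.Icc τ₀ T,
        ‖Δ r‖ ≤ P*‖N‖ + E/β * (Real.exp (β*|r-a|) * D) := by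
      intro r hr
      have hrI : r ∈ Set.Ici τ₀ := hr.1
      have hfi1 : IntervalIntegrable (fun u => Φ r u (F u (sol u a η))) volume a r :=
        hInt a ha r hrI r hrI η
      have hfi2 : IntervalIntegrable (fun u => Φ r u (F u (sol u a η'))) volume a r :=
        hInt a ha r hrI r hrI η'
      have hΔr : Δ r = Φ r a N +
          ∫ u in a..r, (Φ r u (F u (sol u a η)) - Φ r u (F u (sol u a η'))) := by
        rw [intervalIntegral.integral_sub hfi1 hfi2]
        simp only [hΔ, hNdef]
        rw [hVOC a ha r hrI η, hVOC a ha r hrI η', map_sub]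
        abel
      have hnormI : ‖∫ u in a..r, (Φ r u (F u (sol u a η)) - Φ r u (F u (sol u a η')))‖
          ≤ E/β * (Real.exp (β*|r-a|) * D) := by
        have habs : ‖∫ u in a..r, (Φ r u (F u (sol u a η)) - Φ r u (F u (sol u a η')))‖
            ≤ |∫ u in a..r, ‖Φ r u (F u (sol u a η)) - Φ r u (F u (sol u a η'))‖| :=
          intervalIntegral.norm_integral_le_abs_integral_norm
        have hptwise : ∀ᵐ u ∂(volume : Measure ℝ), u ∈ Set.Ici τ₀ → u ∈ Set.Icc τ₀ T →
            ‖Φ r u (F u (sol u a η)) - Φ r u (F u (sol u a η'))‖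
              ≤ E * (Real.exp (β*|u-a|) * D) := by
          filter_upwards [hH2'] with u h2 huI huT
          have hℓu := hℓpos u huI
          have hℓuC := hCb u huT
          have hFb : ‖F u (sol u a η) - F u (sol u a η')‖ ≤ C^2 * L * ‖Δ u‖ := by
            calc ‖F u (sol u a η) - F u (sol u a η')‖
                ≤ ℓ u * Nt u (F u (sol u a η) - F u (sol u a η')) := hNle u huI _
              _ ≤ ℓ u * (L * Nt u (sol u a η - sol u a η')) :=
                  mul_le_mul_of_nonneg_left ((h2 huI).2.2 _ _) hℓu.le
              _ ≤ ℓ u * (L * (ℓ u * ‖sol u a η - sol u a η'‖)) := by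
                  apply mul_le_mul_of_nonneg_left ?_ hℓu.le
                  exact mul_le_mul_of_nonneg_left ((hNequiv u huI _).2) hL
              _ = ℓ u^2 * L * ‖Δ u‖ := by rw [hΔ]; ring
              _ ≤ C^2 * L * ‖Δ u‖ := by
                  apply mul_le_mul_of_nonneg_right ?_ (norm_nonneg _)
                  apply mul_le_mul_of_nonneg_right ?_ hL
                  exact pow_le_pow_left₀ hℓu.le hℓuC 2
          have hΦb : ‖Φ r u‖ ≤ P := hP (r, u) ⟨hr, huT⟩
          calc ‖Φ r u (F u (sol u a η)) - Φ r u (F u (sol u a η'))‖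
              = ‖Φ r u (F u (sol u a η) - F u (sol u a η'))‖ := by rw [map_sub]
            _ ≤ ‖Φ r u‖ * ‖F u (sol u a η) - F u (sol u a η')‖ := (Φ r u).le_opNorm _
            _ ≤ P * (C^2 * L * ‖Δ u‖) :=
                mul_le_mul hΦb hFb (norm_nonneg _) hPnn
            _ = E * ‖Δ u‖ := by rw [hE]; ring
            _ ≤ E * (Real.exp (β*|u-a|) * D) :=
                mul_le_mul_of_nonneg_left (hΔD u huT) hEnn
        rcases le_total a r with har | hra
        · -- forward case
          have hnn : 0 ≤ ∫ u in a..r, ‖Φ r u (F u (sol u a η)) - Φ r u (F u (sol u a η'))‖ :=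
            intervalIntegral.integral_nonneg har (fun u _ => norm_nonneg _)
          rw [abs_of_nonneg hnn] at habs
          have hmono : (∫ u in a..r, ‖Φ r u (F u (sol u a η)) - Φ r u (F u (sol u a η'))‖)
              ≤ ∫ u in a..r, E * D * Real.exp (β*(u-a)) := by
            apply intervalIntegral.integral_mono_ae_restrict har (hfi1.sub hfi2).norm
              (Continuous.intervalIntegrable (by fun_prop) _ _)
            filter_upwards [ae_restrict_of_ae hptwise, ae_restrict_mem measurableSet_Icc]
              with u hpt hu
            have huI : u ∈ Set.Ici τ₀ := le_trans ha hu.1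
            have huT : u ∈ Set.Icc τ₀ T := ⟨huI, le_trans hu.2 hr.2⟩
            have := hpt huI huT
            rw [abs_of_nonneg (by linarith [hu.1] : (0:ℝ) ≤ u - a)] at this
            calc ‖Φ r u (F u (sol u a η)) - Φ r u (F u (sol u a η'))‖
                ≤ E * (Real.exp (β*(u-a)) * D) := this
              _ = E * D * Real.exp (β*(u-a)) := by ring
          have hexp : (∫ u in a..r, E * D * Real.exp (β*(u-a)))
              = E * D * (Real.exp (β*(r-a))/β - Real.exp (β*(a-a))/β) := by
            rw [intervalIntegral.integral_const_mul, aux_exp_integral hβpos.ne' a a r]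
          apply habs.trans
          apply hmono.trans
          rw [hexp]
          rw [abs_of_nonneg (by linarith : (0:ℝ) ≤ r - a)]
          have h1 : Real.exp (β*(a-a)) = 1 := by simp
          rw [h1]
          have h4 : E/β * (Real.exp (β*(r-a)) * D) - E * D * (Real.exp (β*(r-a))/β - 1/β)
              = E*D/β := by ring
          have h5 : (0:ℝ) ≤ E*D/β := by positivity
          linarith
        · -- backward case
          rw [show (∫ u in a..r, ‖Φ r u (F u (sol u a η)) - Φ r u (F u (sol u a η'))‖)
              = -∫ u in r..a, ‖Φ r u (F u (sol u a η)) - Φ r u (F u (sol u a η'))‖ from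
            intervalIntegral.integral_symm r a] at habs
          have hnn : 0 ≤ ∫ u in r..a, ‖Φ r u (F u (sol u a η)) - Φ r u (F u (sol u a η'))‖ :=
            intervalIntegral.integral_nonneg hra (fun u _ => norm_nonneg _)
          rw [abs_neg, abs_of_nonneg hnn] at habs
          have hmono : (∫ u in r..a, ‖Φ r u (F u (sol u a η)) - Φ r u (F u (sol u a η'))‖)
              ≤ ∫ u in r..a, E * D * Real.exp (β*(a-u)) := by
            apply intervalIntegral.integral_mono_ae_restrict hra
              ((hfi1.sub hfi2).norm.symm)
              (Continuous.intervalIntegrable (by fun_prop) _ _)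
            filter_upwards [ae_restrict_of_ae hptwise, ae_restrict_mem measurableSet_Icc]
              with u hpt hu
            have huI : u ∈ Set.Ici τ₀ := le_trans hr.1 hu.1
            have huT : u ∈ Set.Icc τ₀ T := ⟨huI, le_trans hu.2 haT.2⟩
            have := hpt huI huT
            rw [abs_of_nonpos (by linarith [hu.2] : u - a ≤ (0:ℝ))] at this
            calc ‖Φ r u (F u (sol u a η)) - Φ r u (F u (sol u a η'))‖
                ≤ E * (Real.exp (β*(-(u-a))) * D) := this
              _ = E * D * Real.exp (β*(a-u)) := by ring_nf
          have hexp : (∫ u in r..a, E * D * Real.exp (β*(a-u)))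
              = E * D * (Real.exp (β*(a-r))/β - Real.exp (β*(a-a))/β) := by
            rw [intervalIntegral.integral_const_mul, aux_exp_integral' hβpos.ne' a r a]
          apply habs.trans
          apply hmono.trans
          rw [hexp]
          rw [abs_of_nonpos (by linarith : r - a ≤ (0:ℝ))]
          have h1 : Real.exp (β*(a-a)) = 1 := by simp
          rw [h1]
          have h3 : Real.exp (β * -(r-a)) = Real.exp (β*(a-r)) := by
            rw [show β * -(r-a) = β*(a-r) by ring]
          rw [h3]
          have h4 : E/β * (Real.exp (β*(a-r)) * D) - E * D * (Real.exp (β*(a-r))/β - 1/β)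
              = E*D/β := by ring
          have h5 : (0:ℝ) ≤ E*D/β := by positivity
          linarith
      rw [hΔr]
      calc ‖Φ r a N + ∫ u in a..r, (Φ r u (F u (sol u a η)) - Φ r u (F u (sol u a η')))‖
          ≤ ‖Φ r a N‖ +
            ‖∫ u in a..r, (Φ r u (F u (sol u a η)) - Φ r u (F u (sol u a η')))‖ :=
            norm_add_le _ _
        _ ≤ P*‖N‖ + E/β * (Real.exp (β*|r-a|) * D) := by
            apply add_le_add ?_ hnormI
            calc ‖Φ r a N‖ ≤ ‖Φ r a‖ * ‖N‖ := (Φ r a).le_opNorm _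
              _ ≤ P * ‖N‖ := mul_le_mul_of_nonneg_right (hP (r, a) ⟨hr, haT⟩) (norm_nonneg _)
    -- self-improvement
    have hD2 : D ≤ P*‖N‖ + D/2 := by
      apply csSup_le hSne
      rintro y ⟨r, hr, rfl⟩
      have h1 := hkey r hr
      have hexple : Real.exp (-(β*|r-a|)) ≤ 1 := by
        rw [← Real.exp_zero]
        apply Real.exp_le_exp.mpr
        simp only [neg_nonpos]
        positivity
      have hexppos : (0:ℝ) < Real.exp (-(β*|r-a|)) := Real.exp_pos _
      have hcancel : Real.exp (-(β*|r-a|)) * Real.exp (β*|r-a|) = 1 := by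
        rw [← Real.exp_add]; simp
      have hEβ : E/β ≤ 1/2 := by
        rw [div_le_div_iff₀ hβpos (by norm_num : (0:ℝ) < 2)]
        linarith
      have hΔnn : 0 ≤ ‖Δ r‖ := norm_nonneg _
      have hNnorm : 0 ≤ P * ‖N‖ := mul_nonneg hPnn (norm_nonneg _)
      calc w r = Real.exp (-(β*|r-a|)) * ‖Δ r‖ := rfl
        _ ≤ Real.exp (-(β*|r-a|)) * (P*‖N‖ + E/β * (Real.exp (β*|r-a|) * D)) :=
            mul_le_mul_of_nonneg_left h1 hexppos.le
        _ = Real.exp (-(β*|r-a|)) * (P*‖N‖) +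
            E/β * (Real.exp (-(β*|r-a|)) * Real.exp (β*|r-a|)) * D := by ring
        _ = Real.exp (-(β*|r-a|)) * (P*‖N‖) + E/β * D := by rw [hcancel]; ring
        _ ≤ 1 * (P*‖N‖) + (1/2) * D := by
            apply add_le_add
            · exact mul_le_mul_of_nonneg_right hexple hNnorm
            · exact mul_le_mul_of_nonneg_right hEβ hDnn
        _ = P*‖N‖ + D/2 := by ring
    have hDfin : D ≤ 2*(P*‖N‖) := by linarith
    -- conclude
    have hwb := hwD b hbT
    have hcancel : Real.exp (β*|b-a|) * Real.exp (-(β*|b-a|)) = 1 := by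
      rw [← Real.exp_add]; simp
    have habT : |b - a| ≤ T - τ₀ := by
      rw [abs_le]
      constructor <;> [linarith [haT.2, hbT.1]; linarith [haT.1, hbT.2]]
    calc ‖sol b a η - sol b a η'‖ = ‖Δ b‖ := rfl
      _ = Real.exp (β*|b-a|) * w b := by
          rw [hw, ← mul_assoc, hcancel, one_mul]
      _ ≤ Real.exp (β*|b-a|) * (2*(P*‖N‖)) := by
          apply mul_le_mul_of_nonneg_left (le_trans hwb hDfin) (Real.exp_pos _).le
      _ ≤ Real.exp (β*(T-τ₀)) * (2*(P*‖N‖)) := by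
          apply mul_le_mul_of_nonneg_right ?_ (by positivity)
          apply Real.exp_le_exp.mpr
          exact mul_le_mul_of_nonneg_left habT hβpos.le
      _ = Real.exp (β*(T-τ₀)) * (2*P) * ‖η - η'‖ := by rw [hNdef]; ring
  -- the conjugacy
  refine ⟨fun t ξ => sol t τ₀ (Φ τ₀ t ξ), fun t η => Φ t τ₀ (sol τ₀ t η),
    ?_, ?_, ?_, ?_, ?_, ?_, ?_, ?_⟩
  · -- homeomorphism properties
    intro t ht
    have hsolc : Continuous (fun x : X => sol t τ₀ x) := by
      apply hsolCont.comp_continuous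
        (continuous_const.prodMk (continuous_const.prodMk continuous_id))
      exact fun x => by exact ⟨ht, hτ, trivial⟩
    have hsolc' : Continuous (fun x : X => sol τ₀ t x) := by
      apply hsolCont.comp_continuous
        (continuous_const.prodMk (continuous_const.prodMk continuous_id))
      exact fun x => by exact ⟨hτ, ht, trivial⟩
    refine ⟨hsolc.comp (Φ τ₀ t).continuous, (Φ t τ₀).continuous.comp hsolc', ?_, ?_, ?_⟩
    · intro ξ
      show Φ t τ₀ (sol τ₀ t (sol t τ₀ (Φ τ₀ t ξ))) = ξ
      rw [hsolinv t ht, hΦinv t ht]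
    · intro η
      show sol t τ₀ (Φ τ₀ t (Φ t τ₀ (sol τ₀ t η))) = η
      rw [hΦinv' t ht, hsolinv' t ht]
    · show sol t τ₀ (Φ τ₀ t 0) = 0
      rw [map_zero, hsol0 t ht]
  · -- conjugation identity
    intro s hs t ht ξ
    show sol t τ₀ (Φ τ₀ t (Φ t s ξ)) = sol t s (sol s τ₀ (Φ τ₀ s ξ))
    have h1 : Φ τ₀ t (Φ t s ξ) = Φ τ₀ s ξ := by
      have h := hΦcomp τ₀ hτ t ht s hs
      have := congrArg (fun f : X →L[ℝ] X => f ξ) h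
      simpa using this.symm
    rw [h1, hsolGrp τ₀ hτ s hs t ht]
  · -- (iii) for H
    intro t ht ξ
    show Nt t (sol t τ₀ (Φ τ₀ t ξ) - ξ) ≤ K * M / α
    have h : sol t τ₀ (Φ τ₀ t ξ) - ξ = sol t τ₀ (Φ τ₀ t ξ) - Φ t τ₀ (Φ τ₀ t ξ) := by
      rw [hΦinv t ht]
    rw [h]
    exact hCORE t ht (Φ τ₀ t ξ)
  · -- (iii) for G
    intro t ht η
    show Nt t (Φ t τ₀ (sol τ₀ t η) - η) ≤ K * M / α
    have h : Φ t τ₀ (sol τ₀ t η) - η =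
        -(sol t τ₀ (sol τ₀ t η) - Φ t τ₀ (sol τ₀ t η)) := by
      rw [hsolinv' t ht]; abel
    rw [h, hNneg]
    exact hCORE t ht _
  · -- (iv) for H
    intro t ht
    obtain ⟨Λ, hΛ0, hΛ⟩ := hLIP τ₀ hτ t ht
    refine ⟨ℓ t * Λ * ‖Φ τ₀ t‖, mul_nonneg (mul_nonneg (hℓpos t ht).le hΛ0) (norm_nonneg _), ?_⟩
    intro ξ ξ'
    show Nt t (sol t τ₀ (Φ τ₀ t ξ) - sol t τ₀ (Φ τ₀ t ξ')) ≤ ℓ t * Λ * ‖Φ τ₀ t‖ * ‖ξ - ξ'‖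
    calc Nt t (sol t τ₀ (Φ τ₀ t ξ) - sol t τ₀ (Φ τ₀ t ξ'))
        ≤ ℓ t * ‖sol t τ₀ (Φ τ₀ t ξ) - sol t τ₀ (Φ τ₀ t ξ')‖ := (hNequiv t ht _).2
      _ ≤ ℓ t * (Λ * ‖Φ τ₀ t ξ - Φ τ₀ t ξ'‖) := by
          apply mul_le_mul_of_nonneg_left (hΛ _ _) (hℓpos t ht).le
      _ = ℓ t * (Λ * ‖Φ τ₀ t (ξ - ξ')‖) := by rw [map_sub]
      _ ≤ ℓ t * (Λ * (‖Φ τ₀ t‖ * ‖ξ - ξ'‖)) := by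
          apply mul_le_mul_of_nonneg_left ?_ (hℓpos t ht).le
          exact mul_le_mul_of_nonneg_left ((Φ τ₀ t).le_opNorm _) hΛ0
      _ = ℓ t * Λ * ‖Φ τ₀ t‖ * ‖ξ - ξ'‖ := by ring
  · -- (iv) for G
    intro t ht
    obtain ⟨Λ, hΛ0, hΛ⟩ := hLIP t ht τ₀ hτ
    refine ⟨ℓ t * ‖Φ t τ₀‖ * Λ, mul_nonneg (mul_nonneg (hℓpos t ht).le (norm_nonneg _)) hΛ0, ?_⟩
    intro η η'
    show Nt t (Φ t τ₀ (sol τ₀ t η) - Φ t τ₀ (sol τ₀ t η')) ≤ ℓ t * ‖Φ t τ₀‖ * Λ * ‖η - η'‖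
    calc Nt t (Φ t τ₀ (sol τ₀ t η) - Φ t τ₀ (sol τ₀ t η'))
        ≤ ℓ t * ‖Φ t τ₀ (sol τ₀ t η) - Φ t τ₀ (sol τ₀ t η')‖ := (hNequiv t ht _).2
      _ = ℓ t * ‖Φ t τ₀ (sol τ₀ t η - sol τ₀ t η')‖ := by rw [map_sub]
      _ ≤ ℓ t * (‖Φ t τ₀‖ * ‖sol τ₀ t η - sol τ₀ t η'‖) := by
          apply mul_le_mul_of_nonneg_left ((Φ t τ₀).le_opNorm _) (hℓpos t ht).le
      _ ≤ ℓ t * (‖Φ t τ₀‖ * (Λ * ‖η - η'‖)) := by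
          apply mul_le_mul_of_nonneg_left ?_ (hℓpos t ht).le
          exact mul_le_mul_of_nonneg_left (hΛ _ _) (norm_nonneg _)
      _ = ℓ t * ‖Φ t τ₀‖ * Λ * ‖η - η'‖ := by ring
  · -- joint continuity of H
    have step1 : ContinuousOn (fun p : ℝ × X => Φ τ₀ p.1 p.2)
        (Set.Ici τ₀ ×ˢ (Set.univ : Set X)) := by
      have hop : ContinuousOn (fun p : ℝ × X => Φ τ₀ p.1)
          (Set.Ici τ₀ ×ˢ (Set.univ : Set X)) := by
        apply hΦcont.comp (continuous_const.prodMk continuous_fst).continuousOn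
        intro p hp
        exact ⟨hτ, hp.1⟩
      exact isBoundedBilinearMap_apply.continuous.comp_continuousOn
        (hop.prodMk continuousOn_snd)
    apply hsolCont.comp
      (continuousOn_fst.prodMk (continuousOn_const.prodMk step1))
    intro p hp
    exact ⟨hp.1, hτ, trivial⟩
  · -- joint continuity of G
    have step1 : ContinuousOn (fun p : ℝ × X => sol τ₀ p.1 p.2)
        (Set.Ici τ₀ ×ˢ (Set.univ : Set X)) := by
      apply hsolCont.comp
        (continuousOn_const.prodMk (continuousOn_fst.prodMk continuousOn_snd))
      intro p hp
      exact ⟨hτ, hp.1, trivial⟩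
    have hop : ContinuousOn (fun p : ℝ × X => Φ p.1 τ₀)
        (Set.Ici τ₀ ×ˢ (Set.univ : Set X)) := by
      apply hΦcont.comp (continuous_fst.prodMk continuous_const).continuousOn
      intro p hp
      exact ⟨hp.1, hτ⟩
    exact isBoundedBilinearMap_apply.continuous.comp_continuousOn (hop.prodMk step1)
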